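/- Let X be a smooth cubic surface over a field k that is split by a finite Galois extension K/k of degree a power of 5, and suppose X contains a k-line L. Then the conic bundle f : X → P¹ associated to L admits a section over k, and hence there is a k-line L' ⊂ X disjoint from L. -/

import Mathlib

/-!
Model: the Picard group of a smooth cubic surface over a separably closed
field is identified with `ℤ⁷ = Fin 7 → ℤ` with its standard basis
`λ₀, L₁, …, L₆` (pullback of a line and the six exceptional classes),
intersection form `picInter`, canonical class `KX = -3λ₀ + L₁ + ⋯ + L₆`.
The classes of the 27 lines are exactly the classes `l` with
`l·l = -1` and `KX·l = -1`.
-/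

def picInter (a b : Fin 7 → ℤ) : ℤ := a 0 * b 0 - ∑ i : Fin 6, a i.succ * b i.succ

def KX : Fin 7 → ℤ := ![-3, 1, 1, 1, 1, 1, 1]

def IsLineClass (l : Fin 7 → ℤ) : Prop := picInter l l = -1 ∧ picInter KX l = -1

/-!
Galois model: for a smooth cubic surface `X` over a field `k`, split by a
finite Galois extension with group `G`, the Galois action on the geometric
Picard group is a homomorphism `ρ : G →* AddAut (Fin 7 → ℤ)` preserving the
intersection form, the canonical class and the set of line classes.
`Pic(X)` is identified with the fixed subgroup `fixedSubgroup ρ`, and the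
subgroup `Δ ⊆ Pic(X)` generated by norms (from finite separable extensions)
of lines is `Delta ρ`: the subgroup generated by the Galois-orbit sums
(= norms from the field of definition) of the 27 line classes.
-/

/-- The multiplicative group structure that older Mathlib put on `AddAut M`
(composition as multiplication); current Mathlib makes `AddAut M` an additive group. -/
instance addAutGroupOld (M : Type*) [Add M] : Group (AddAut M) where
  mul g h := AddEquiv.trans h g
  one := AddEquiv.refl _
  inv := AddEquiv.symm
  mul_assoc _ _ _ := rfl
  one_mul _ := rfl
  mul_one _ := rfl
  inv_mul_cancel := AddEquiv.self_trans_symm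

variable {G : Type*} [Group G] [Fintype G]

noncomputable def normOrbit (ρ : G →* AddAut (Fin 7 → ℤ)) (l : Fin 7 → ℤ) : Fin 7 → ℤ :=
  ∑ m ∈ Finset.image (fun g => ρ g l) Finset.univ, m

noncomputable def Delta (ρ : G →* AddAut (Fin 7 → ℤ)) : AddSubgroup (Fin 7 → ℤ) :=
  AddSubgroup.closure { x | ∃ l, IsLineClass l ∧ x = normOrbit ρ l }

def fixedSubgroup (ρ : G →* AddAut (Fin 7 → ℤ)) : AddSubgroup (Fin 7 → ℤ) where
  carrier := {x | ∀ g, ρ g x = x}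
  zero_mem' := fun g => map_zero (ρ g)
  add_mem' := fun {a b} ha hb g => by rw [map_add, ha g, hb g]
  neg_mem' := fun {a} ha g => by rw [map_neg, ha g]

def lineVec : Fin 27 → Fin 7 → ℤ :=
  ![![0,1,0,0,0,0,0],
    ![0,0,1,0,0,0,0],
    ![0,0,0,1,0,0,0],
    ![0,0,0,0,1,0,0],
    ![0,0,0,0,0,1,0],
    ![0,0,0,0,0,0,1],
    ![1,-1,-1,0,0,0,0],
    ![1,-1,0,-1,0,0,0],
    ![1,-1,0,0,-1,0,0],
    ![1,-1,0,0,0,-1,0],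
    ![1,-1,0,0,0,0,-1],
    ![1,0,-1,-1,0,0,0],
    ![1,0,-1,0,-1,0,0],
    ![1,0,-1,0,0,-1,0],
    ![1,0,-1,0,0,0,-1],
    ![1,0,0,-1,-1,0,0],
    ![1,0,0,-1,0,-1,0],
    ![1,0,0,-1,0,0,-1],
    ![1,0,0,0,-1,-1,0],
    ![1,0,0,0,-1,0,-1],
    ![1,0,0,0,0,-1,-1],
    ![2,0,-1,-1,-1,-1,-1],
    ![2,-1,0,-1,-1,-1,-1],
    ![2,-1,-1,0,-1,-1,-1],
    ![2,-1,-1,-1,0,-1,-1],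
    ![2,-1,-1,-1,-1,0,-1],
    ![2,-1,-1,-1,-1,-1,0]]

instance (l : Fin 7 → ℤ) : Decidable (IsLineClass l) := by
  unfold IsLineClass; infer_instance

lemma lineVec_isLine : ∀ j, IsLineClass (lineVec j) := by decide
lemma lineVec_inj : Function.Injective lineVec := by decide
lemma card16 : ∀ i : Fin 27,
    (Finset.univ.filter fun j => picInter (lineVec i) (lineVec j) = 0).card = 16 := by decide

set_option maxRecDepth 10000 in
lemma key : ∀ a b c d e f g : Fin 3,
    IsLineClass ![(a:ℤ), (b:ℤ)-1, (c:ℤ)-1, (d:ℤ)-1, (e:ℤ)-1, (f:ℤ)-1, (g:ℤ)-1] →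
    ∃ j, ![(a:ℤ), (b:ℤ)-1, (c:ℤ)-1, (d:ℤ)-1, (e:ℤ)-1, (f:ℤ)-1, (g:ℤ)-1] = lineVec j := by
  decide

lemma abs_le_sq (x : ℤ) : |x| ≤ x ^ 2 := by
  rcases eq_or_ne x 0 with rfl | h
  · simp
  · have h1 : 1 ≤ |x| := Int.one_le_abs (by simpa using h)
    have h2 : |x| ^ 2 = x ^ 2 := sq_abs x
    nlinarith [abs_nonneg x]

lemma vec7_five (a0 a1 a2 a3 a4 a5 a6 : ℤ) :
    ![a0,a1,a2,a3,a4,a5,a6] (5 : Fin 7) = a5 := rfl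
lemma vec7_six (a0 a1 a2 a3 a4 a5 a6 : ℤ) :
    ![a0,a1,a2,a3,a4,a5,a6] (6 : Fin 7) = a6 := rfl

lemma mem_lines {l : Fin 7 → ℤ} (h : IsLineClass l) : ∃ j, l = lineVec j := by
  obtain ⟨h1, h2⟩ := id h
  unfold picInter at h1 h2
  have hKs : ∀ i : Fin 6, KX i.succ = (1:ℤ) := by decide
  have hK0 : KX 0 = (-3:ℤ) := rfl
  rw [hK0, Finset.sum_congr rfl (fun i _ => by rw [hKs i, one_mul])] at h2
  have hq : ∑ i : Fin 6, (l i.succ) ^ 2 = l 0 * l 0 + 1 := by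
    have e : ∑ i : Fin 6, (l i.succ) ^ 2 = ∑ i : Fin 6, l i.succ * l i.succ :=
      Finset.sum_congr rfl (fun i _ => sq (l i.succ))
    rw [e]; linarith
  have hs : ∑ i : Fin 6, l i.succ = 1 - 3 * l 0 := by linarith
  have hCS := sq_sum_le_card_mul_sum_sq (s := (Finset.univ : Finset (Fin 6)))
    (f := fun i => l i.succ)
  rw [hs, hq] at hCS
  simp only [Finset.card_univ, Fintype.card_fin] at hCS
  push_cast at hCS
  have ha0 : 0 ≤ l 0 := by nlinarith
  have ha2 : l 0 ≤ 2 := by nlinarith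
  have hb : ∀ i : Fin 6, -1 ≤ l i.succ ∧ l i.succ ≤ 1 := by
    intro j
    have hsq : (l j.succ) ^ 2 ≤ 1 := by
      by_contra hc
      push_neg at hc
      set x := l j.succ with hx
      have hXsq : |x| ^ 2 = x ^ 2 := sq_abs x
      have hX0 : 0 ≤ |x| := abs_nonneg x
      have hX2 : 2 ≤ |x| := by nlinarith
      have hsplit : x ^ 2 + ∑ i ∈ Finset.univ.erase j, (l i.succ) ^ 2
          = ∑ i : Fin 6, (l i.succ) ^ 2 :=
        Finset.add_sum_erase Finset.univ (fun i => (l i.succ) ^ 2) (Finset.mem_univ j)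
      have hnn : 0 ≤ ∑ i ∈ Finset.univ.erase j, (l i.succ) ^ 2 :=
        Finset.sum_nonneg (fun i _ => sq_nonneg _)
      have hXle : |x| ≤ 2 := by by_contra hcc; push_neg at hcc; nlinarith
      have hX : |x| = 2 := le_antisymm hXle hX2
      have hx4 : x ^ 2 = 4 := by rw [← hXsq, hX]; norm_num
      have ha2' : 2 ≤ l 0 := by nlinarith
      have haa : l 0 = 2 := le_antisymm ha2 ha2'
      have hrest : ∑ i ∈ Finset.univ.erase j, (l i.succ) ^ 2 = 1 := by
        rw [haa] at hq; omega
      have hsplit2 : x + ∑ i ∈ Finset.univ.erase j, l i.succ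
          = ∑ i : Fin 6, l i.succ :=
        Finset.add_sum_erase Finset.univ (fun i => l i.succ) (Finset.mem_univ j)
      have habs : |∑ i ∈ Finset.univ.erase j, l i.succ| ≤ 1 := by
        calc |∑ i ∈ Finset.univ.erase j, l i.succ|
            ≤ ∑ i ∈ Finset.univ.erase j, |l i.succ| :=
              Finset.abs_sum_le_sum_abs _ _
          _ ≤ ∑ i ∈ Finset.univ.erase j, (l i.succ) ^ 2 :=
              Finset.sum_le_sum (fun i _ => abs_le_sq _)
          _ ≤ 1 := le_of_eq hrest
      rw [abs_le] at habs
      rcases abs_cases x with ⟨he, _⟩ | ⟨he, _⟩ <;> rw [hX] at he <;>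
        rw [haa] at hs <;> omega
    constructor <;> nlinarith
  have hb1 : -1 ≤ l 1 ∧ l 1 ≤ 1 := hb 0
  have hb2 : -1 ≤ l 2 ∧ l 2 ≤ 1 := hb 1
  have hb3 : -1 ≤ l 3 ∧ l 3 ≤ 1 := hb 2
  have hb4 : -1 ≤ l 4 ∧ l 4 ≤ 1 := hb 3
  have hb5 : -1 ≤ l 5 ∧ l 5 ≤ 1 := hb 4
  have hb6 : -1 ≤ l 6 ∧ l 6 ≤ 1 := hb 5
  let A : Fin 3 := ⟨(l 0).toNat, by omega⟩
  let B : Fin 6 → Fin 3 := fun i => ⟨(l i.succ + 1).toNat, by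
    have := hb i; omega⟩
  have hl : l = ![(A:ℤ), (B 0:ℤ)-1, (B 1:ℤ)-1, (B 2:ℤ)-1, (B 3:ℤ)-1, (B 4:ℤ)-1,
      (B 5:ℤ)-1] := by
    funext i
    have s0 : (0:Fin 6).succ = (1:Fin 7) := rfl
    have s1 : (1:Fin 6).succ = (2:Fin 7) := rfl
    have s2 : (2:Fin 6).succ = (3:Fin 7) := rfl
    have s3 : (3:Fin 6).succ = (4:Fin 7) := rfl
    have s4 : (4:Fin 6).succ = (5:Fin 7) := rfl
    have s5 : (5:Fin 6).succ = (6:Fin 7) := rfl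
    fin_cases i <;>
      simp [A, B, s0, s1, s2, s3, s4, s5, Matrix.cons_val_succ, vec7_five, vec7_six, Fin.succ] <;> omega
  rw [hl] at h ⊢
  exact key A (B 0) (B 1) (B 2) (B 3) (B 4) (B 5) h

lemma picInter_comm (a b : Fin 7 → ℤ) : picInter a b = picInter b a := by
  unfold picInter
  rw [mul_comm]
  congr 1
  exact Finset.sum_congr rfl (fun i _ => mul_comm _ _)

lemma picInter_expand (a b c : Fin 7 → ℤ) :
    picInter a (-b - c) = -picInter a b - picInter a c := by
  unfold picInter
  simp only [Pi.sub_apply, Pi.neg_apply, mul_sub, mul_neg,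
    Finset.sum_sub_distrib, Finset.sum_neg_distrib]
  ring


/-- If the smooth cubic surface `X/k` is split by a Galois extension of
degree a power of 5 (so `G` is a 5-group) and contains a `k`-line `L`, then
the conic bundle associated to `L` admits a section over `k`; indeed there
is a `k`-line `L'` disjoint from `L`, which is a section
(`L'·(-KX - L) = 1`). -/
theorem stmt14
    (ρ : G →* AddAut (Fin 7 → ℤ))
    (hlines : ∀ (g : G) (l : Fin 7 → ℤ), IsLineClass l → IsLineClass (ρ g l))
    (hint : ∀ (g : G) (a b : Fin 7 → ℤ), picInter (ρ g a) (ρ g b) = picInter a b)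
    (hK : ∀ g : G, ρ g KX = KX)
    (h5 : IsPGroup 5 G)
    (L : Fin 7 → ℤ) (hL : IsLineClass L) (hLfix : ∀ g : G, ρ g L = L) :
    ∃ L', IsLineClass L' ∧ (∀ g : G, ρ g L' = L') ∧
      picInter L L' = 0 ∧ picInter L' (-KX - L) = 1 := by
  obtain ⟨i₀, hi₀⟩ := mem_lines hL
  subst hi₀
  have hmove : ∀ (g : G) (j : Fin 27), ∃ k, ρ g (lineVec j) = lineVec k :=
    fun g j => mem_lines (hlines g _ (lineVec_isLine j))
  choose idx hidx using hmove
  have hP : ∀ (g : G) (j : Fin 27), picInter (lineVec i₀) (lineVec j) = 0 →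
      picInter (lineVec i₀) (lineVec (idx g j)) = 0 := by
    intro g j hj
    calc picInter (lineVec i₀) (lineVec (idx g j))
        = picInter (ρ g (lineVec i₀)) (ρ g (lineVec j)) := by
          rw [hLfix g, hidx g j]
      _ = picInter (lineVec i₀) (lineVec j) := hint g _ _
      _ = 0 := hj
  letI : MulAction G {j : Fin 27 // picInter (lineVec i₀) (lineVec j) = 0} :=
    { smul := fun g j => ⟨idx g j.1, hP g j.1 j.2⟩
      one_smul := fun j => by
        apply Subtype.ext
        apply lineVec_inj
        show lineVec (idx 1 j.1) = lineVec j.1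
        rw [← hidx 1 j.1, map_one]
        rfl
      mul_smul := fun g h j => by
        apply Subtype.ext
        apply lineVec_inj
        show lineVec (idx (g * h) j.1) = lineVec (idx g (idx h j.1))
        rw [← hidx, ← hidx, ← hidx, map_mul]
        rfl }
  haveI : Fact (Nat.Prime 5) := ⟨by norm_num⟩
  have hcard : Nat.card {j : Fin 27 // picInter (lineVec i₀) (lineVec j) = 0} = 16 := by
    rw [Nat.card_eq_fintype_card, Fintype.card_subtype]
    exact card16 i₀
  obtain ⟨⟨j, hj⟩, hfix⟩ := h5.nonempty_fixed_point_of_prime_not_dvd_card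
    {j : Fin 27 // picInter (lineVec i₀) (lineVec j) = 0} (by rw [hcard]; norm_num)
  rw [MulAction.mem_fixedPoints] at hfix
  have hjfix : ∀ g : G, ρ g (lineVec j) = lineVec j := by
    intro g
    have h1 := hfix g
    have h2 : idx g j = j := congrArg Subtype.val h1
    rw [hidx g j, h2]
  refine ⟨lineVec j, lineVec_isLine j, hjfix, hj, ?_⟩
  rw [picInter_expand, picInter_comm (lineVec j) KX, (lineVec_isLine j).2,
    picInter_comm (lineVec j) (lineVec i₀), hj]
  ring
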